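/- The holonomy group of Tetra is cyclic of order 4: the image of Γ_T under the linear-part homomorphism Lin : Isom(ℝ³) → O(3) is exactly {I, R, R², R³}, where R is the quarter-turn (x,y,z) ↦ (−y, x, z); in particular this image is a cyclic group of order 4. -/

import Mathlib

noncomputable section

/-- Points of `ℝ³`, written as `(x, y, z)`. -/
abbrev R3 : Type := ℝ × ℝ × ℝ

/-- The translation `T_w : x ↦ x + w` of `ℝ³`, as a bijection (it is an isometry). -/
def transl (w : R3) : Equiv.Perm R3 := Equiv.addRight w

/-- The quarter-turn screw motion `τ(x,y,z) = (−y, x, z+1/2)`, as a bijection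
(it is an isometry). -/
def tauE : Equiv.Perm R3 where
  toFun p := (-p.2.1, p.1, p.2.2 + 1/2)
  invFun p := (p.2.1, -p.1, p.2.2 - 1/2)
  left_inv p := by obtain ⟨x, y, z⟩ := p; simp
  right_inv p := by obtain ⟨x, y, z⟩ := p; simp

/-- The half-turn screw motion `ρ_x(x,y,z) = (x+1/2, −y, −z)`, as a bijection
(it is an isometry). -/
def rhoxE : Equiv.Perm R3 where
  toFun p := (p.1 + 1/2, -p.2.1, -p.2.2)
  invFun p := (p.1 - 1/2, -p.2.1, -p.2.2)
  left_inv p := by obtain ⟨x, y, z⟩ := p; simp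
  right_inv p := by obtain ⟨x, y, z⟩ := p; simp

/-- The half-turn screw motion `ρ_y(x,y,z) = (−x, y+1/2, 1−z)`, as a bijection
(it is an isometry). -/
def rhoyE : Equiv.Perm R3 where
  toFun p := (-p.1, p.2.1 + 1/2, 1 - p.2.2)
  invFun p := (-p.1, p.2.1 - 1/2, 1 - p.2.2)
  left_inv p := by obtain ⟨x, y, z⟩ := p; simp
  right_inv p := by obtain ⟨x, y, z⟩ := p; simp

/-- `Γ_T`, the covering group of the tetracosm Tetra: the group generated by the
translations `T_{(1,0,0)}, T_{(0,1,0)}, T_{(0,0,2)}` and `τ`. -/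
def GammaT : Subgroup (Equiv.Perm R3) :=
  Subgroup.closure {transl (1, 0, 0), transl (0, 1, 0), transl (0, 0, 2), tauE}

/-- `Γ_D`, the covering group of the didicosm Didi: the group generated by the
translations `T_{(1,0,0)}, T_{(0,1,0)}, T_{(0,0,2)}` and `ρ_x`, `ρ_y`. -/
def GammaD : Subgroup (Equiv.Perm R3) :=
  Subgroup.closure {transl (1, 0, 0), transl (0, 1, 0), transl (0, 0, 2), rhoxE, rhoyE}

end
/-- The quarter-turn `R(x,y,z) = (−y, x, z)` about the z-axis, as a linear map
(it is orthogonal). -/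
def quarterTurn : R3 →ₗ[ℝ] R3 where
  toFun p := (-p.2.1, p.1, p.2.2)
  map_add' p q := by simp [Prod.ext_iff]; ring
  map_smul' c p := by simp [Prod.ext_iff]

local notation "Q" => (quarterTurn : Module.End ℝ R3)

lemma Q_apply (p : R3) : quarterTurn p = (-p.2.1, p.1, p.2.2) := rfl

lemma Q4 : Q ^ 4 = 1 := by
  apply LinearMap.ext
  intro p
  simp [pow_succ, Module.End.mul_apply, Q_apply]

lemma gammaT_lin : ∀ γ ∈ GammaT, ∃ n : ℕ, ∃ b : R3, ∀ x, γ x = (Q ^ n) x + b := by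
  intro γ hγ
  induction hγ using Subgroup.closure_induction with
  | mem g hg =>
    rcases hg with h | h | h | h
    · exact ⟨0, (1,0,0), fun x => by simp [h, transl]⟩
    · exact ⟨0, (0,1,0), fun x => by simp [h, transl]⟩
    · exact ⟨0, (0,0,2), fun x => by simp [h, transl]⟩
    · refine ⟨1, (0, 0, 1/2), fun x => ?_⟩
      rw [h]
      obtain ⟨a, b, c⟩ := x
      simp [tauE, Q_apply, Prod.ext_iff]
  | one => exact ⟨0, 0, fun x => by simp⟩
  | mul g h hg hh ihg ihh =>
    obtain ⟨n, b, hb⟩ := ihg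
    obtain ⟨m, c, hc⟩ := ihh
    refine ⟨n + m, (Q ^ n) c + b, fun x => ?_⟩
    rw [Equiv.Perm.mul_apply, hc, hb, map_add, pow_add, Module.End.mul_apply, add_assoc]
  | inv g hg ih =>
    obtain ⟨n, b, hb⟩ := ih
    refine ⟨3 * n, -((Q ^ (3 * n)) b), fun x => ?_⟩
    have h4 : Q ^ (n + 3 * n) = 1 := by
      have : n + 3 * n = 4 * n := by ring
      rw [this, pow_mul, Q4, one_pow]
    have key : g ((Q ^ (3 * n)) x + -((Q ^ (3 * n)) b)) = x := by
      rw [hb, map_add, map_neg, ← Module.End.mul_apply, ← Module.End.mul_apply,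
        ← pow_add, h4]
      simp
    conv_lhs => rw [← key]
    rw [Equiv.Perm.inv_eq_iff_eq]

lemma Q_pow_mem (n : ℕ) :
    ((Q ^ n : Module.End ℝ R3) : R3 →ₗ[ℝ] R3) ∈
      ({LinearMap.id, quarterTurn, quarterTurn ∘ₗ quarterTurn,
        quarterTurn ∘ₗ quarterTurn ∘ₗ quarterTurn} : Set (R3 →ₗ[ℝ] R3)) := by
  have hn : Q ^ n = Q ^ (n % 4) := by
    conv_lhs => rw [← Nat.div_add_mod n 4]
    rw [pow_add, pow_mul, Q4, one_pow, one_mul]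
  rw [hn]
  have h4 : n % 4 < 4 := Nat.mod_lt _ (by norm_num)
  set m := n % 4 with hm
  interval_cases m
  · left; rfl
  · right; left; rw [pow_one]
  · right; right; left
    rw [pow_two, Module.End.mul_eq_comp]
  · right; right; right
    rw [pow_succ, pow_two, Module.End.mul_eq_comp, Module.End.mul_eq_comp]
    rfl


/-- the holonomy group of Tetra is cyclic of order 4: the image of `Γ_T`
under the linear-part homomorphism is exactly `{I, R, R², R³}` with `R` the quarter
turn `(x,y,z) ↦ (−y,x,z)`; moreover `R` has order 4, so this image is cyclic of
order 4. (The linear part of `γ` is the unique linear map `A` with `γ x = A x + b`.) -/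
theorem holonomy_tetra :
    (∀ γ ∈ GammaT, ∃ A ∈ ({LinearMap.id, quarterTurn, quarterTurn ∘ₗ quarterTurn,
        quarterTurn ∘ₗ quarterTurn ∘ₗ quarterTurn} : Set (R3 →ₗ[ℝ] R3)),
      ∃ b : R3, ∀ x : R3, γ x = A x + b) ∧
    (∀ γ ∈ GammaT, ∀ (A : R3 →ₗ[ℝ] R3) (b : R3), (∀ x : R3, γ x = A x + b) →
      A ∈ ({LinearMap.id, quarterTurn, quarterTurn ∘ₗ quarterTurn,
        quarterTurn ∘ₗ quarterTurn ∘ₗ quarterTurn} : Set (R3 →ₗ[ℝ] R3))) ∧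
    (∀ A ∈ ({LinearMap.id, quarterTurn, quarterTurn ∘ₗ quarterTurn,
        quarterTurn ∘ₗ quarterTurn ∘ₗ quarterTurn} : Set (R3 →ₗ[ℝ] R3)),
      ∃ γ ∈ GammaT, ∃ b : R3, ∀ x : R3, γ x = A x + b) ∧
    orderOf (quarterTurn : Module.End ℝ R3) = 4 := by
  have htau : tauE ∈ GammaT := Subgroup.subset_closure (by simp)
  have hfirst : ∀ γ ∈ GammaT, ∃ A ∈ ({LinearMap.id, quarterTurn, quarterTurn ∘ₗ quarterTurn,
        quarterTurn ∘ₗ quarterTurn ∘ₗ quarterTurn} : Set (R3 →ₗ[ℝ] R3)),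
      ∃ b : R3, ∀ x : R3, γ x = A x + b := by
    intro γ hγ
    obtain ⟨n, b, hb⟩ := gammaT_lin γ hγ
    exact ⟨Q ^ n, Q_pow_mem n, b, hb⟩
  refine ⟨hfirst, ?_, ?_, ?_⟩
  · intro γ hγ A b hAb
    obtain ⟨A', hA', b', hb'⟩ := hfirst γ hγ
    have hbb : b = b' := by
      have := (hAb 0).symm.trans (hb' 0)
      simpa using this
    have : A = A' := by
      apply LinearMap.ext
      intro x
      have := (hAb x).symm.trans (hb' x)
      rw [hbb] at this
      exact add_right_cancel this
    rw [this]; exact hA'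
  · intro A hA
    simp only [Set.mem_insert_iff, Set.mem_singleton_iff] at hA
    rcases hA with h | h | h | h
    · exact ⟨1, one_mem _, 0, fun x => by simp [h]⟩
    · refine ⟨tauE, htau, (0, 0, 1/2), fun x => ?_⟩
      obtain ⟨a, b, c⟩ := x
      simp [tauE, h, Q_apply, Prod.ext_iff]
    · refine ⟨tauE * tauE, mul_mem htau htau, (0, 0, 1), fun x => ?_⟩
      obtain ⟨a, b, c⟩ := x
      simp [tauE, h, Q_apply, LinearMap.comp_apply, Prod.ext_iff]
      ring
    · refine ⟨tauE * tauE * tauE, mul_mem (mul_mem htau htau) htau, (0, 0, 3/2), fun x => ?_⟩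
      obtain ⟨a, b, c⟩ := x
      simp [tauE, h, Q_apply, LinearMap.comp_apply, Prod.ext_iff]
      ring
  · have hp : Fact (Nat.Prime 2) := ⟨by norm_num⟩
    have h2 : ¬ Q ^ 2 ^ 1 = 1 := by
      intro h
      have := LinearMap.ext_iff.mp h ((1 : ℝ), (0 : ℝ), (0 : ℝ))
      norm_num [pow_succ, Module.End.mul_apply, Q_apply, Prod.ext_iff] at this
    have h4 : Q ^ 2 ^ 2 = 1 := by norm_num [Q4]
    have := @orderOf_eq_prime_pow _ _ Q 1 2 hp h2 h4
    simpa using this
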